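/- arXiv:1610.04811 — 3 statements merged into one kernel-verified Lean document; each statement's English description precedes it below -/
import Mathlib

section
/- Let S be an m×m density matrix (positive semidefinite Hermitian with unit trace) with rank(S) ≤ l. Then for every density matrix S₁, one has ‖S₁ − S‖_1 ≤ 2√(2l) · ‖S₁ − S‖_2. -/
open scoped ENNReal ComplexOrder

noncomputable def schattenNorm {n : Type*} [Fintype n] [DecidableEq n]
    (p : ℝ≥0∞) (A : Matrix n n ℂ) : ℝ :=
  if p = ⊤ then ⨆ i, Real.sqrt ((Matrix.isHermitian_conjTranspose_mul_self A).eigenvalues i)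
  else (∑ i, Real.sqrt ((Matrix.isHermitian_conjTranspose_mul_self A).eigenvalues i) ^ p.toReal)
    ^ (1 / p.toReal)

def IsDensityMatrix {n : Type*} [Fintype n] [DecidableEq n] (S : Matrix n n ℂ) : Prop :=
  S.PosSemidef ∧ S.trace = 1

noncomputable def matLog {n : Type*} [Fintype n] [DecidableEq n]
    (A : Matrix n n ℂ) : Matrix n n ℂ :=
  if hA : A.IsHermitian then
    (hA.eigenvectorUnitary : Matrix n n ℂ) *
      Matrix.diagonal (fun i => (Real.log (hA.eigenvalues i) : ℂ)) *
      (star hA.eigenvectorUnitary : Matrix n n ℂ)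
  else 0

noncomputable def relEnt {n : Type*} [Fintype n] [DecidableEq n]
    (S₁ S₂ : Matrix n n ℂ) : ℝ :=
  ((S₁ * (matLog S₁ - matLog S₂)).trace).re


open scoped Matrix
open Polynomial

lemma my_charpoly_conj {n : Type*} [Fintype n] [DecidableEq n]
    (U : Matrix.unitaryGroup n ℂ) (B : Matrix n n ℂ) :
    ((U : Matrix n n ℂ) * B * (star U : Matrix n n ℂ)).charpoly = B.charpoly := by
  have hUV : (U : Matrix n n ℂ) * (star U : Matrix n n ℂ) = 1 :=
    Matrix.mem_unitaryGroup_iff.mp U.2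
  set Uc := (U : Matrix n n ℂ).map (C : ℂ →+* ℂ[X]) with hUc
  set Vc := (star U : Matrix n n ℂ).map (C : ℂ →+* ℂ[X]) with hVc
  have hUVc : Uc * Vc = 1 := by
    rw [hUc, hVc, ← Matrix.map_mul, hUV, Matrix.map_one _ (map_zero _) (map_one _)]
  have key : Matrix.charmatrix ((U : Matrix n n ℂ) * B * (star U : Matrix n n ℂ))
      = Uc * Matrix.charmatrix B * Vc := by
    rw [Matrix.charmatrix, Matrix.charmatrix]
    rw [Matrix.mul_sub, Matrix.sub_mul]
    congr 1
    · rw [← (Matrix.scalar_commute (X : ℂ[X]) (fun r => Commute.all _ _) Uc).eq, mul_assoc, hUVc, mul_one]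
    · simp only [RingHom.mapMatrix_apply]
      rw [← Matrix.map_mul, ← Matrix.map_mul]
  rw [Matrix.charpoly, Matrix.charpoly, key, Matrix.det_mul, Matrix.det_mul]
  have : Uc.det * Vc.det = 1 := by
    rw [← Matrix.det_mul, hUVc, Matrix.det_one]
  calc Uc.det * (Matrix.charmatrix B).det * Vc.det
      = (Matrix.charmatrix B).det * (Uc.det * Vc.det) := by ring
    _ = (Matrix.charmatrix B).det := by rw [this, mul_one]

lemma diag_charpoly {m : ℕ} (d : Fin m → ℂ) :
    (Matrix.diagonal d).charpoly = ∏ i, (X - C (d i)) := by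
  rw [Matrix.charpoly_of_upperTriangular _ (Matrix.blockTriangular_diagonal d)]
  simp

lemma multiset_eigs {m : ℕ} {B : Matrix (Fin m) (Fin m) ℂ} (hB : B.IsHermitian)
    (U : Matrix.unitaryGroup (Fin m) ℂ) (d : Fin m → ℝ)
    (h : B = (U : Matrix (Fin m) (Fin m) ℂ) * Matrix.diagonal (fun i => (d i : ℂ))
      * (star U : Matrix (Fin m) (Fin m) ℂ)) :
    Finset.univ.val.map hB.eigenvalues = Finset.univ.val.map d := by
  have key : ∀ (V : Matrix.unitaryGroup (Fin m) ℂ) (e : Fin m → ℝ),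
      B = (V : Matrix (Fin m) (Fin m) ℂ) * Matrix.diagonal (fun i => (e i : ℂ))
        * (star V : Matrix (Fin m) (Fin m) ℂ) →
      B.charpoly.roots = Finset.univ.val.map (fun i => (e i : ℂ)) := by
    intro V e hV
    rw [hV, my_charpoly_conj, diag_charpoly]
    rw [Finset.prod_eq_multiset_prod]
    have : Multiset.map (fun i => X - C ((e i : ℂ))) Finset.univ.val
        = Multiset.map (fun a => X - C a) (Multiset.map (fun i => (e i : ℂ)) Finset.univ.val) := by
      rw [Multiset.map_map]; rfl
    rw [this]
    exact Polynomial.roots_multiset_prod_X_sub_C _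
  have h1 := key hB.eigenvectorUnitary hB.eigenvalues (by
    simpa [Function.comp_def] using hB.spectral_theorem)
  have h2 := key U d h
  have h3 : Finset.univ.val.map (fun i => (hB.eigenvalues i : ℂ))
      = Finset.univ.val.map (fun i => (d i : ℂ)) := h1.symm.trans h2
  have := congrArg (Multiset.map Complex.re) h3
  simpa [Multiset.map_map, Function.comp_def] using this

lemma sum_eigs {m : ℕ} {B : Matrix (Fin m) (Fin m) ℂ} (hB : B.IsHermitian)
    (U : Matrix.unitaryGroup (Fin m) ℂ) (d : Fin m → ℝ)
    (h : B = (U : Matrix (Fin m) (Fin m) ℂ) * Matrix.diagonal (fun i => (d i : ℂ))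
      * (star U : Matrix (Fin m) (Fin m) ℂ))
    (g : ℝ → ℝ) : ∑ i, g (hB.eigenvalues i) = ∑ i, g (d i) := by
  have h3 := congrArg (Multiset.map g) (multiset_eigs hB U d h)
  rw [Multiset.map_map, Multiset.map_map] at h3
  have e1 : ∑ i, g (hB.eigenvalues i) = (Finset.univ.val.map (g ∘ hB.eigenvalues)).sum := rfl
  have e2 : ∑ i, g (d i) = (Finset.univ.val.map (g ∘ d)).sum := rfl
  rw [e1, e2]
  exact congrArg Multiset.sum h3

lemma card_neg_le_rank {m : ℕ} {S S₁ A : Matrix (Fin m) (Fin m) ℂ}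
    (hS : S.PosSemidef) (hS₁ : S₁.PosSemidef) (hA : A.IsHermitian)
    (hAdef : A = S₁ - S) :
    (Finset.univ.filter (fun i => hA.eigenvalues i < 0)).card ≤ S.rank := by
  classical
  set μ := hA.eigenvalues with hμ
  set U := hA.eigenvectorUnitary with hU
  have hspec : A = (U : Matrix (Fin m) (Fin m) ℂ) * Matrix.diagonal (fun i => (μ i : ℂ))
      * (star U : Matrix (Fin m) (Fin m) ℂ) := by
    simpa [Function.comp_def] using hA.spectral_theorem
  have hsU : (star U : Matrix (Fin m) (Fin m) ℂ) * (U : Matrix (Fin m) (Fin m) ℂ) = 1 := by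
    exact_mod_cast Unitary.coe_star_mul_self U
  set N : Finset (Fin m) := Finset.univ.filter (fun i => μ i < 0) with hN
  let ext : (↥N → ℂ) →ₗ[ℂ] (Fin m → ℂ) :=
    Function.ExtendByZero.linearMap ℂ (Subtype.val : ↥N → Fin m)
  let φ : (↥N → ℂ) →ₗ[ℂ] (Fin m → ℂ) :=
    S.mulVecLin ∘ₗ ((U : Matrix (Fin m) (Fin m) ℂ).mulVecLin ∘ₗ ext)
  have hinj : Function.Injective φ := by
    rw [injective_iff_map_eq_zero]
    intro c hc
    set e : Fin m → ℂ := Function.extend Subtype.val c 0 with he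
    set v : Fin m → ℂ := (U : Matrix (Fin m) (Fin m) ℂ).mulVec e with hv
    have hSv : S.mulVec v = 0 := hc
    have hAv : A.mulVec v = (U : Matrix (Fin m) (Fin m) ℂ).mulVec
        (Matrix.diagonal (fun i => (μ i : ℂ)) *ᵥ e) := by
      rw [hspec, hv, Matrix.mulVec_mulVec]
      have h2 : ((U : Matrix (Fin m) (Fin m) ℂ) * Matrix.diagonal (fun i => (μ i : ℂ))
          * (star U : Matrix (Fin m) (Fin m) ℂ)) * (U : Matrix (Fin m) (Fin m) ℂ)
          = (U : Matrix (Fin m) (Fin m) ℂ) * Matrix.diagonal (fun i => (μ i : ℂ)) := by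
        rw [mul_assoc, hsU, mul_one]
      rw [h2, ← Matrix.mulVec_mulVec]
    have hq : star v ⬝ᵥ A.mulVec v = ∑ j, (starRingEnd ℂ) (e j) * ((μ j : ℂ) * e j) := by
      rw [hAv, hv, Matrix.star_mulVec, Matrix.dotProduct_mulVec, Matrix.vecMul_vecMul,
        show ((U : Matrix (Fin m) (Fin m) ℂ))ᴴ * (U : Matrix (Fin m) (Fin m) ℂ) = 1 from hsU,
        Matrix.vecMul_one]
      simp [dotProduct, Matrix.mulVec_diagonal, Pi.star_apply, mul_comm, mul_left_comm]
    have hsplit : star v ⬝ᵥ S₁.mulVec v = star v ⬝ᵥ A.mulVec v := by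
      have : S₁ = A + S := by rw [hAdef]; abel
      rw [this, Matrix.add_mulVec, dotProduct_add, hSv, dotProduct_zero, add_zero]
    have hre : (0:ℝ) ≤ ∑ j, μ j * Complex.normSq (e j) := by
      have h0 := hS₁.dotProduct_mulVec_nonneg v
      rw [hsplit, hq] at h0
      have h1 := (Complex.nonneg_iff.mp h0).1
      calc (0:ℝ) ≤ (∑ j, (starRingEnd ℂ) (e j) * ((μ j : ℂ) * e j)).re := h1
        _ = ∑ j, μ j * Complex.normSq (e j) := by
          rw [Complex.re_sum]
          congr 1; funext j
          have : (starRingEnd ℂ) (e j) * ((μ j : ℂ) * e j)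
              = ((μ j : ℝ) : ℂ) * ((Complex.normSq (e j) : ℝ) : ℂ) := by
            rw [Complex.normSq_eq_conj_mul_self]; ring
          rw [this, ← Complex.ofReal_mul, Complex.ofReal_re]
    have hterm : ∀ j ∈ (Finset.univ : Finset (Fin m)), μ j * Complex.normSq (e j) ≤ 0 := by
      intro j _
      by_cases hj : j ∈ N
      · have : μ j < 0 := (Finset.mem_filter.mp hj).2
        exact mul_nonpos_of_nonpos_of_nonneg this.le (Complex.normSq_nonneg _)
      · have hej : e j = 0 := by
          rw [he, Function.extend_apply']
          · rfl
          · rintro ⟨a, rfl⟩; exact hj a.2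
        simp [hej]
    have hzero : ∀ j ∈ (Finset.univ : Finset (Fin m)), μ j * Complex.normSq (e j) = 0 := by
      have hle : ∑ j, μ j * Complex.normSq (e j) ≤ 0 := Finset.sum_nonpos hterm
      have := le_antisymm hle hre
      exact (Finset.sum_eq_zero_iff_of_nonpos hterm).mp this
    funext a
    have ha := hzero a.val (Finset.mem_univ _)
    have hμa : μ a.val < 0 := (Finset.mem_filter.mp a.2).2
    have : Complex.normSq (e a.val) = 0 := by
      rcases mul_eq_zero.mp ha with h | h
      · exact absurd h (ne_of_lt hμa)
      · exact h
    have : e a.val = 0 := by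
      exact Complex.normSq_eq_zero.mp this
    have heval : e a.val = c a := by
      rw [he]; exact Subtype.val_injective.extend_apply c 0 a
    rw [heval] at this
    exact this
  have hcard : N.card = Module.finrank ℂ (LinearMap.range φ) := by
    rw [LinearMap.finrank_range_of_inj hinj]
    simp [Module.finrank_pi]
  have hle : LinearMap.range φ ≤ LinearMap.range S.mulVecLin :=
    LinearMap.range_comp_le_range _ _
  calc N.card = Module.finrank ℂ (LinearMap.range φ) := hcard
    _ ≤ Module.finrank ℂ (LinearMap.range S.mulVecLin) := Submodule.finrank_mono hle
    _ = S.rank := rfl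


/-- For a density matrix S with rank at most l and any other density matrix S₁,
the nuclear norm of the difference is bounded by 2√(2l) times its Frobenius norm. -/
theorem nuclear_le_sqrt_rank_mul_frobenius {m : ℕ} (l : ℕ)
    (S S₁ : Matrix (Fin m) (Fin m) ℂ)
    (hS : IsDensityMatrix S) (hS₁ : IsDensityMatrix S₁)
    (hrank : S.rank ≤ l) :
    schattenNorm 1 (S₁ - S) ≤ 2 * Real.sqrt (2 * l) * schattenNorm 2 (S₁ - S) := by
  classical
  obtain ⟨hSp, hStr⟩ := hS
  obtain ⟨hS₁p, hS₁tr⟩ := hS₁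
  set A := S₁ - S with hAdef
  have hA : A.IsHermitian := hS₁p.1.sub hSp.1
  set μ := hA.eigenvalues with hμdef
  set U := hA.eigenvectorUnitary with hUdef
  have hspec : A = (U : Matrix (Fin m) (Fin m) ℂ) * Matrix.diagonal (fun i => (μ i : ℂ))
      * (star U : Matrix (Fin m) (Fin m) ℂ) := by
    simpa [Function.comp_def] using hA.spectral_theorem
  have hsU : (star U : Matrix (Fin m) (Fin m) ℂ) * (U : Matrix (Fin m) (Fin m) ℂ) = 1 := by
    exact_mod_cast Unitary.coe_star_mul_self U
  set D := Matrix.diagonal (fun i => (μ i : ℂ)) with hDdef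
  -- decomposition of AᴴA
  have hB : Aᴴ * A = (U : Matrix (Fin m) (Fin m) ℂ)
      * Matrix.diagonal (fun i => ((μ i ^ 2 : ℝ) : ℂ)) * (star U : Matrix (Fin m) (Fin m) ℂ) := by
    rw [show Aᴴ = A from hA]
    conv_lhs => rw [hspec]
    have key : ((U : Matrix (Fin m) (Fin m) ℂ) * D * (star U : Matrix (Fin m) (Fin m) ℂ))
        * ((U : Matrix (Fin m) (Fin m) ℂ) * D * (star U : Matrix (Fin m) (Fin m) ℂ))
        = (U : Matrix (Fin m) (Fin m) ℂ) * (D * D) * (star U : Matrix (Fin m) (Fin m) ℂ) := by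
      simp only [mul_assoc]
      congr 1
      rw [← mul_assoc (star (U : Matrix (Fin m) (Fin m) ℂ)), hsU, one_mul]
    rw [key, hDdef, Matrix.diagonal_mul_diagonal]
    congr 2
    funext i
    push_cast
    ring
  have hν := fun (g : ℝ → ℝ) =>
    sum_eigs (Matrix.isHermitian_conjTranspose_mul_self A) U (fun i => μ i ^ 2) hB g
  -- trace zero
  have htr : ∑ i, μ i = 0 := by
    have h1 : A.trace = 0 := by rw [hAdef, Matrix.trace_sub, hS₁tr, hStr, sub_self]
    have h2 : A.trace = ∑ i, (μ i : ℂ) := by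
      rw [hspec, Matrix.trace_mul_cycle, hsU, one_mul, hDdef, Matrix.trace_diagonal]
    have h3 := h1 ▸ h2
    have := congrArg Complex.re h3.symm
    simpa [Complex.re_sum] using this
  -- negative eigenvalue set
  set N : Finset (Fin m) := Finset.univ.filter (fun i => μ i < 0) with hN
  have hcard : (N.card : ℝ) ≤ l := by
    exact_mod_cast (card_neg_le_rank hSp hS₁p hA hAdef).trans hrank
  set t : ℝ := ∑ i ∈ N, (-μ i) with ht
  have htnonneg : 0 ≤ t := Finset.sum_nonneg fun i hi =>
    neg_nonneg.mpr (Finset.mem_filter.mp hi).2.le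
  have habs : ∑ i, |μ i| = 2 * t := by
    rw [← Finset.sum_filter_add_sum_filter_not Finset.univ (fun i => μ i < 0) (fun i => |μ i|)]
    have e1 : ∑ i ∈ N, |μ i| = t := by
      apply Finset.sum_congr rfl
      intro i hi
      exact abs_of_neg (Finset.mem_filter.mp hi).2
    have e2 : ∑ i ∈ Finset.univ.filter (fun i => ¬ μ i < 0), |μ i|
        = ∑ i ∈ Finset.univ.filter (fun i => ¬ μ i < 0), μ i := by
      apply Finset.sum_congr rfl
      intro i hi
      exact abs_of_nonneg (not_lt.mp (Finset.mem_filter.mp hi).2)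
    have e3 : ∑ i ∈ Finset.univ.filter (fun i => ¬ μ i < 0), μ i = t := by
      have := Finset.sum_filter_add_sum_filter_not Finset.univ (fun i => μ i < 0) μ
      rw [htr] at this
      have : ∑ i ∈ Finset.univ.filter (fun i => ¬ μ i < 0), μ i = - ∑ i ∈ N, μ i := by
        linarith [this]
      rw [this, ht, ← Finset.sum_neg_distrib]
    rw [e1, e2, e3]; ring
  -- Cauchy-Schwarz
  have hCS : t ^ 2 ≤ (N.card : ℝ) * ∑ i ∈ N, μ i ^ 2 := by
    have := Finset.sum_mul_sq_le_sq_mul_sq N (fun _ => (1:ℝ)) (fun i => -μ i)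
    simpa [ht] using this
  have hsublesum : ∑ i ∈ N, μ i ^ 2 ≤ ∑ i, μ i ^ 2 :=
    Finset.sum_le_sum_of_subset_of_nonneg (Finset.filter_subset _ _)
      (fun i _ _ => sq_nonneg _)
  have hsumsq_nonneg : (0:ℝ) ≤ ∑ i, μ i ^ 2 := Finset.sum_nonneg fun i _ => sq_nonneg _
  have hT : t ≤ Real.sqrt (2 * l) * Real.sqrt (∑ i, μ i ^ 2) := by
    have h1 : t = Real.sqrt (t ^ 2) := (Real.sqrt_sq htnonneg).symm
    have h2 : t ^ 2 ≤ (2 * l) * ∑ i, μ i ^ 2 := by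
      calc t ^ 2 ≤ (N.card : ℝ) * ∑ i ∈ N, μ i ^ 2 := hCS
        _ ≤ (2 * l) * ∑ i, μ i ^ 2 := by
          apply mul_le_mul _ hsublesum (Finset.sum_nonneg fun i _ => sq_nonneg _) (by positivity)
          linarith [hcard]
    rw [h1, ← Real.sqrt_mul (by positivity) ]
    exact Real.sqrt_le_sqrt h2
  -- identify the norms
  have hnorm1 : schattenNorm 1 A = ∑ i, |μ i| := by
    rw [schattenNorm, if_neg (show (1:ℝ≥0∞) ≠ ⊤ by simp)]
    simp only [ENNReal.toReal_one, Real.rpow_one, one_div_one]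
    rw [hν Real.sqrt]
    congr 1; funext i; exact Real.sqrt_sq_eq_abs (μ i)
  have hnorm2 : schattenNorm 2 A = Real.sqrt (∑ i, μ i ^ 2) := by
    rw [schattenNorm, if_neg (show (2:ℝ≥0∞) ≠ ⊤ by simp)]
    have h2 : ((2:ℝ≥0∞)).toReal = (2:ℝ) := by simp
    rw [h2]
    have hterm : ∀ x : ℝ, Real.sqrt x ^ (2:ℝ) = Real.sqrt x ^ (2:ℕ) := by
      intro x
      rw [← Real.rpow_natCast (Real.sqrt x) 2]
      norm_num
    simp only [hterm]
    have hν2 : ∑ i, Real.sqrt ((Matrix.isHermitian_conjTranspose_mul_self A).eigenvalues i) ^ (2:ℕ)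
        = ∑ i, Real.sqrt (μ i ^ 2) ^ (2:ℕ) := hν (fun y => Real.sqrt y ^ (2:ℕ))
    rw [hν2]
    have : ∑ i, Real.sqrt (μ i ^ 2) ^ (2:ℕ) = ∑ i, μ i ^ 2 := by
      apply Finset.sum_congr rfl
      intro i _
      rw [Real.sq_sqrt (sq_nonneg _)]
    rw [this, Real.sqrt_eq_rpow]
  rw [hnorm1, hnorm2, habs]
  nlinarith [hT, Real.sqrt_nonneg (2 * (l:ℝ)), Real.sqrt_nonneg (∑ i, μ i ^ 2)]
end

section
/- Let S be an m×m density matrix with rank(S) ≤ l, supported on the l-dimensional subspace L spanned by its eigenvectors with nonzero eigenvalues. Define the projection operators 𝒫_L^⊥(A) = P_{L^⊥} A P_{L^⊥} and 𝒫_L(A) = A − P_{L^⊥} A P_{L^⊥}, where P_{L^⊥} is the orthogonal projector onto L^⊥. Then for every density matrix S₁, ‖𝒫_L^⊥(S₁)‖_1 ≤ ‖𝒫_L(S₁ − S)‖_1. -/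
open scoped ENNReal ComplexOrder

open Matrix in
private lemma trace_eq_sum_eigs {n : Type*} [Fintype n] [DecidableEq n] {A : Matrix n n ℂ}
    (hA : A.IsHermitian) : A.trace = ∑ i, (hA.eigenvalues i : ℂ) := by
  conv_lhs => rw [hA.spectral_theorem]
  rw [Unitary.conjStarAlgAut_apply, Matrix.trace_mul_cycle, Unitary.coe_star_mul_self, one_mul, Matrix.trace_diagonal]
  simp

open Matrix in
lemma schattenNorm_one_hermitian {n : Type*} [Fintype n] [DecidableEq n] {B : Matrix n n ℂ}
    (hB : B.IsHermitian) : schattenNorm 1 B = ∑ i, |hB.eigenvalues i| := by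
  have hM : (Bᴴ * B).PosSemidef := Matrix.posSemidef_conjTranspose_mul_self B
  set U : Matrix n n ℂ := (hB.eigenvectorUnitary : Matrix n n ℂ) with hU
  set C : Matrix n n ℂ :=
    U * Matrix.diagonal (fun i => ((|hB.eigenvalues i| : ℝ) : ℂ)) * star U with hC
  have hCpsd : C.PosSemidef := by
    have hd : (Matrix.diagonal (fun i => ((|hB.eigenvalues i| : ℝ) : ℂ))).PosSemidef := by
      refine Matrix.posSemidef_diagonal_iff.mpr fun i => ?_
      exact_mod_cast Complex.zero_le_real.mpr (abs_nonneg _)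
    simpa [hC, Matrix.star_eq_conjTranspose] using hd.mul_mul_conjTranspose_same U
  have hUU : star U * U = 1 := Unitary.coe_star_mul_self _
  have hC2 : C ^ 2 = Bᴴ * B := by
    have hBB : Bᴴ * B = U * Matrix.diagonal (fun i => ((hB.eigenvalues i : ℂ))^2) * star U := by
      conv_lhs => rw [hB.eq, hB.spectral_theorem, Unitary.conjStarAlgAut_apply]
      simp only [Matrix.mul_assoc]
      rw [← Matrix.mul_assoc (star U) U, hUU, one_mul, ← Matrix.mul_assoc
        (Matrix.diagonal _), Matrix.diagonal_mul_diagonal]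
      simp [hU, Function.comp, pow_two]
    rw [hBB, hC, pow_two]
    simp only [Matrix.mul_assoc]
    rw [← Matrix.mul_assoc (star U) U, hUU, one_mul,
      ← Matrix.mul_assoc (Matrix.diagonal _), Matrix.diagonal_mul_diagonal]
    congr 2
    ext i j
    congr 1
    ext i
    rw [← Complex.ofReal_mul, ← pow_two, sq_abs, ← Complex.ofReal_pow, pow_two]
  open scoped MatrixOrder in
  have hCsqrt : C = CFC.sqrt (Bᴴ * B) :=
    (CFC.sqrt_unique (by rw [← pow_two]; exact hC2) hCpsd.nonneg).symm
  have htrC : C.trace = ∑ i, ((|hB.eigenvalues i| : ℝ) : ℂ) := by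
    rw [hC, Matrix.trace_mul_cycle, hUU, one_mul, Matrix.trace_diagonal]
    
  open scoped MatrixOrder in
  have htrS : (CFC.sqrt (Bᴴ * B)).trace =
      ∑ i, ((Real.sqrt ((Matrix.isHermitian_conjTranspose_mul_self B).eigenvalues i) : ℝ) : ℂ) := by
    rw [CFC.sqrt_eq_cfc, cfc_nnreal_eq_real _ (Bᴴ * B), hM.1.cfc_eq, Matrix.IsHermitian.cfc,
      Unitary.conjStarAlgAut_apply, Matrix.trace_mul_cycle, Unitary.coe_star_mul_self, one_mul,
      Matrix.trace_diagonal]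
    refine Finset.sum_congr rfl fun i _ => ?_
    simp [Real.coe_toNNReal _ (hM.eigenvalues_nonneg i)]
    rw [max_eq_left (hM.eigenvalues_nonneg i)]
  have key : ∑ i, Real.sqrt ((Matrix.isHermitian_conjTranspose_mul_self B).eigenvalues i)
      = ∑ i, |hB.eigenvalues i| := by
    have := hCsqrt ▸ htrC
    rw [htrS] at this
    exact_mod_cast this
  simp [schattenNorm, key]


open Matrix in
lemma schattenNorm_one_posSemidef {n : Type*} [Fintype n] [DecidableEq n] {A : Matrix n n ℂ}
    (hA : A.PosSemidef) : schattenNorm 1 A = (A.trace).re := by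
  rw [schattenNorm_one_hermitian hA.1, trace_eq_sum_eigs hA.1]
  simp only [Complex.re_sum, Complex.ofReal_re]
  exact Finset.sum_congr rfl fun i _ => abs_of_nonneg (hA.eigenvalues_nonneg i)

/-- For a density matrix S with rank at most l, supported on the subspace L spanned by its
eigenvectors with nonzero eigenvalues, and P the orthogonal projector onto L^⊥
(characterized by: P is Hermitian, idempotent, annihilates S, and rank P + rank S = m),
for every density matrix S₁ one has ‖𝒫_L^⊥(S₁)‖₁ ≤ ‖𝒫_L(S₁ − S)‖₁, where
𝒫_L^⊥(A) = P A P and 𝒫_L(A) = A − P A P. -/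
theorem proj_complement_nuclear_le {m : ℕ} (l : ℕ)
    (S S₁ P : Matrix (Fin m) (Fin m) ℂ)
    (hS : IsDensityMatrix S) (hS₁ : IsDensityMatrix S₁)
    (hrank : S.rank ≤ l)
    (hP : P.IsHermitian) (hP2 : P * P = P) (hPS : P * S = 0)
    (hPrank : P.rank + S.rank = m) :
    schattenNorm 1 (P * S₁ * P) ≤ schattenNorm 1 ((S₁ - S) - P * (S₁ - S) * P) := by
  have hA : (P * S₁ * P).PosSemidef := by
    have := hS₁.1.mul_mul_conjTranspose_same P
    rwa [hP.eq] at this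
  set B : Matrix (Fin m) (Fin m) ℂ := (S₁ - S) - P * (S₁ - S) * P with hBdef
  have hBherm : B.IsHermitian := by
    have h1 : (S₁ - S).IsHermitian := hS₁.1.1.sub hS.1.1
    have h2 : (P * (S₁ - S) * P).IsHermitian := by
      unfold Matrix.IsHermitian
      rw [Matrix.conjTranspose_mul, Matrix.conjTranspose_mul, hP.eq, h1.eq, Matrix.mul_assoc]
    exact h1.sub h2
  have hPSP : P * S * P = 0 := by rw [hPS, Matrix.zero_mul]
  have htrB : B.trace = -(P * S₁ * P).trace := by
    have hexp : P * (S₁ - S) * P = P * S₁ * P - P * S * P := by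
      rw [Matrix.mul_sub, Matrix.sub_mul]
    rw [hBdef, Matrix.trace_sub, Matrix.trace_sub, hexp, Matrix.trace_sub, hPSP,
      hS.2, hS₁.2, Matrix.trace_zero]
    ring
  have hLHS : schattenNorm 1 (P * S₁ * P) = ((P * S₁ * P).trace).re :=
    schattenNorm_one_posSemidef hA
  have hLHSnn : 0 ≤ ((P * S₁ * P).trace).re := by
    rw [← hLHS, schattenNorm_one_hermitian hA.1]
    exact Finset.sum_nonneg fun i _ => abs_nonneg _
  have hBre : (B.trace).re = ∑ i, hBherm.eigenvalues i := by
    rw [trace_eq_sum_eigs hBherm]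
    simp [Complex.re_sum]
  have hRHS : schattenNorm 1 B = ∑ i, |hBherm.eigenvalues i| := schattenNorm_one_hermitian hBherm
  calc schattenNorm 1 (P * S₁ * P) = ((P * S₁ * P).trace).re := hLHS
    _ = |(B.trace).re| := by rw [htrB]; simp [abs_of_nonneg hLHSnn]
    _ = |∑ i, hBherm.eigenvalues i| := by rw [hBre]
    _ ≤ ∑ i, |hBherm.eigenvalues i| := Finset.abs_sum_le_sum_abs _ _
    _ = schattenNorm 1 B := hRHS.symm
end

section
/- Let ρ be an m×m density matrix with rank(ρ) ≤ r, supported on subspace L, and let ρ̂ be any density matrix. Then ‖ρ̂ − ρ‖_1 ≤ 2‖𝒫_L(ρ̂ − ρ)‖_1 ≤ 4r‖ρ̂ − ρ‖_∞, where 𝒫_L(A) = A − P_{L^⊥} A P_{L^⊥}. -/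
open scoped ENNReal ComplexOrder

open Matrix
open scoped Matrix.Norms.L2Operator

set_option linter.unusedSectionVars false
set_option maxHeartbeats 1000000

namespace SchattenAux

variable {n : Type*} [Fintype n] [DecidableEq n]

/-- singular values -/
noncomputable def sv (A : Matrix n n ℂ) (i : n) : ℝ :=
  Real.sqrt ((Matrix.isHermitian_conjTranspose_mul_self A).eigenvalues i)

lemma sv_nonneg (A : Matrix n n ℂ) (i : n) : 0 ≤ sv A i := Real.sqrt_nonneg _

lemma eig_nonneg (A : Matrix n n ℂ) (i : n) :
    0 ≤ (Matrix.isHermitian_conjTranspose_mul_self A).eigenvalues i :=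
  (Matrix.posSemidef_conjTranspose_mul_self A).eigenvalues_nonneg i

lemma sq_sv (A : Matrix n n ℂ) (i : n) :
    sv A i ^ 2 = (Matrix.isHermitian_conjTranspose_mul_self A).eigenvalues i :=
  Real.sq_sqrt (eig_nonneg A i)

noncomputable def nuc (A : Matrix n n ℂ) : ℝ := ∑ i, sv A i

lemma nuc_nonneg (A : Matrix n n ℂ) : 0 ≤ nuc A :=
  Finset.sum_nonneg fun i _ => sv_nonneg A i

lemma schattenNorm_one_eq (A : Matrix n n ℂ) : schattenNorm 1 A = nuc A := by
  simp [schattenNorm, nuc, sv]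

lemma schattenNorm_top_eq (A : Matrix n n ℂ) : schattenNorm ⊤ A = ⨆ i, sv A i := by
  simp [schattenNorm, sv]

/-- Euclidean-space version of a plain vector. -/
noncomputable def ev (x : n → ℂ) : EuclideanSpace ℂ n := (WithLp.equiv 2 _).symm x

lemma inner_ev (x y : n → ℂ) : (inner ℂ (ev x) (ev y) : ℂ) = star x ⬝ᵥ y :=
  (EuclideanSpace.inner_toLp_toLp x y).trans (dotProduct_comm _ _)

lemma norm_ev_sq (x : n → ℂ) : ‖ev x‖ ^ 2 = (star x ⬝ᵥ x).re := by
  rw [← inner_ev]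
  exact (inner_self_eq_norm_sq (𝕜 := ℂ) (ev x)).symm

lemma abs_dot_le (x y : n → ℂ) : ‖star x ⬝ᵥ y‖ ≤ ‖ev x‖ * ‖ev y‖ := by
  rw [← inner_ev]
  exact norm_inner_le_norm (𝕜 := ℂ) _ _

lemma dot_conj_mul (A : Matrix n n ℂ) (x : n → ℂ) :
    star x ⬝ᵥ ((Aᴴ * A) *ᵥ x) = star (A *ᵥ x) ⬝ᵥ (A *ᵥ x) := by
  rw [← mulVec_mulVec, dotProduct_mulVec, star_mulVec]

lemma norm_ev_mulVec_sq (A : Matrix n n ℂ) (x : n → ℂ) :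
    ‖ev (A *ᵥ x)‖ ^ 2 = (star x ⬝ᵥ ((Aᴴ * A) *ᵥ x)).re := by
  rw [norm_ev_sq, dot_conj_mul]

/-- eigenvector basis of `Aᴴ * A` -/
noncomputable def evb (A : Matrix n n ℂ) : OrthonormalBasis n ℂ (EuclideanSpace ℂ n) :=
  (Matrix.isHermitian_conjTranspose_mul_self A).eigenvectorBasis

lemma dot_evb (A : Matrix n n ℂ) (j : n) :
    star (⇑(evb A j)) ⬝ᵥ ((Aᴴ * A) *ᵥ ⇑(evb A j)) =
      ((Matrix.isHermitian_conjTranspose_mul_self A).eigenvalues j : ℂ) := by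
  unfold evb
  rw [(Matrix.isHermitian_conjTranspose_mul_self A).mulVec_eigenvectorBasis j,
    dotProduct_smul]
  have h1 : (star (⇑((Matrix.isHermitian_conjTranspose_mul_self A).eigenvectorBasis j)) ⬝ᵥ
      ⇑((Matrix.isHermitian_conjTranspose_mul_self A).eigenvectorBasis j)) = 1 := by
    have h2 := (Matrix.isHermitian_conjTranspose_mul_self A).eigenvectorBasis.orthonormal.1 j
    rw [dotProduct_comm, ← EuclideanSpace.inner_eq_star_dotProduct, inner_self_eq_norm_sq_to_K, h2]
    norm_num
  rw [h1]
  simp [Complex.real_smul]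

lemma norm_ev_evb (A : Matrix n n ℂ) (j : n) : ‖(evb A j : EuclideanSpace ℂ n)‖ = 1 :=
  (evb A).orthonormal.1 j

lemma ev_coe (x : EuclideanSpace ℂ n) : ev (⇑x : n → ℂ) = x := rfl

lemma norm_mulVec_evb (A : Matrix n n ℂ) (j : n) : ‖ev (A *ᵥ ⇑(evb A j))‖ = sv A j := by
  have h := norm_ev_mulVec_sq A ⇑(evb A j)
  rw [dot_evb] at h
  simp only [Complex.ofReal_re] at h
  have := congrArg Real.sqrt h
  rwa [Real.sqrt_sq (norm_nonneg _)] at this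

lemma norm_mulVec_le (A : Matrix n n ℂ) (x : n → ℂ) : ‖ev (A *ᵥ x)‖ ≤ ‖A‖ * ‖ev x‖ :=
  A.l2_opNorm_mulVec (ev x)

lemma sv_le_opNorm (A : Matrix n n ℂ) (j : n) : sv A j ≤ ‖A‖ := by
  have := norm_mulVec_le A ⇑(evb A j)
  rwa [norm_mulVec_evb, ev_coe, norm_ev_evb, mul_one] at this

lemma conj_diag (V M : Matrix n n ℂ) (j : n) :
    (Vᴴ * M * V) j j = star (fun a => V a j) ⬝ᵥ (M *ᵥ fun a => V a j) := by
  simp only [mul_apply, conjTranspose_apply, dotProduct, mulVec, Finset.sum_mul,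
    Finset.mul_sum, Pi.star_apply]
  rw [Finset.sum_comm]
  exact Finset.sum_congr rfl fun a _ => Finset.sum_congr rfl fun b _ => by ring

lemma trace_conj (V : Matrix.unitaryGroup n ℂ) (M : Matrix n n ℂ) :
    ((star (V : Matrix n n ℂ)) * M * (V : Matrix n n ℂ)).trace = M.trace := by
  rw [Matrix.trace_mul_cycle, (Matrix.mem_unitaryGroup_iff).mp V.2, Matrix.one_mul]

lemma trace_eq_sum_evb (A M : Matrix n n ℂ) :
    M.trace = ∑ j, star (⇑(evb A j)) ⬝ᵥ (M *ᵥ ⇑(evb A j)) := by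
  classical
  set hAA := Matrix.isHermitian_conjTranspose_mul_self A
  rw [← trace_conj hAA.eigenvectorUnitary M, Matrix.trace,
    Matrix.star_eq_conjTranspose]
  refine Finset.sum_congr rfl fun j _ => ?_
  rw [show Matrix.diag _ j = ((hAA.eigenvectorUnitary : Matrix n n ℂ)ᴴ * M *
      (hAA.eigenvectorUnitary : Matrix n n ℂ)) j j from rfl, conj_diag]
  congr 1

lemma re_trace_mul_le (B A : Matrix n n ℂ) :
    ((B * A).trace).re ≤ ‖B‖ * nuc A := by
  rw [trace_eq_sum_evb A (B * A), Complex.re_sum, nuc, Finset.mul_sum]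
  refine Finset.sum_le_sum fun j _ => ?_
  have h1 : (B * A) *ᵥ ⇑(evb A j) = B *ᵥ (A *ᵥ ⇑(evb A j)) := (Matrix.mulVec_mulVec _ _ _).symm
  calc (star (⇑(evb A j)) ⬝ᵥ ((B * A) *ᵥ ⇑(evb A j))).re
      ≤ ‖star (⇑(evb A j)) ⬝ᵥ ((B * A) *ᵥ ⇑(evb A j))‖ := Complex.re_le_norm _
    _ ≤ ‖ev (⇑(evb A j))‖ * ‖ev ((B * A) *ᵥ ⇑(evb A j))‖ := abs_dot_le _ _
    _ = ‖ev (B *ᵥ (A *ᵥ ⇑(evb A j)))‖ := by rw [ev_coe, norm_ev_evb, one_mul, h1]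
    _ ≤ ‖B‖ * ‖ev (A *ᵥ ⇑(evb A j))‖ := norm_mulVec_le _ _
    _ = ‖B‖ * sv A j := by rw [norm_mulVec_evb]

lemma norm_one_le : ‖(1 : Matrix n n ℂ)‖ ≤ 1 := by
  rw [Matrix.cstar_norm_def, _root_.map_one]
  exact (congrArg norm ContinuousLinearMap.one_def).le.trans ContinuousLinearMap.norm_id_le

lemma proj_norm_le_one {X : Matrix n n ℂ} (h1 : Xᴴ = X) (h2 : X * X = X) : ‖X‖ ≤ 1 := by
  have h : ‖X‖ * ‖X‖ = ‖X‖ := by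
    rw [← Matrix.l2_opNorm_conjTranspose_mul_self, h1, h2]
  nlinarith [norm_nonneg X]

lemma exists_dual (A : Matrix n n ℂ) :
    ∃ B : Matrix n n ℂ, ‖B‖ ≤ 1 ∧ ((B * A).trace) = (nuc A : ℂ) := by
  classical
  set hAA := Matrix.isHermitian_conjTranspose_mul_self A with hhAA
  set V : Matrix n n ℂ := (hAA.eigenvectorUnitary : Matrix n n ℂ) with hV
  set lam := hAA.eigenvalues with hlam
  set d : n → ℂ := fun i => ((if lam i = 0 then (0:ℝ) else (sv A i)⁻¹ : ℝ) : ℂ) with hd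
  have hVV : V * Vᴴ = 1 := (Matrix.mem_unitaryGroup_iff).mp hAA.eigenvectorUnitary.2
  have hVV' : Vᴴ * V = 1 := (Matrix.mem_unitaryGroup_iff').mp hAA.eigenvectorUnitary.2
  have hdiagAA : Vᴴ * (Aᴴ * A) * V = diagonal (RCLike.ofReal ∘ lam) :=
    by have h := hAA.conjStarAlgAut_star_eigenvectorUnitary
       rwa [Unitary.conjStarAlgAut_star_apply, Matrix.star_eq_conjTranspose] at h
  have hsv : ∀ i, lam i ≠ 0 → sv A i ≠ 0 := by
    intro i hi h0
    have := sq_sv A i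
    rw [h0] at this
    simp only [hlam] at hi
    exact hi (by simpa using this.symm)
  refine ⟨V * diagonal d * Vᴴ * Aᴴ, ?_, ?_⟩
  · -- norm bound
    set B := V * diagonal d * Vᴴ * Aᴴ with hB
    have hdstar : star d = d := by
      funext i
      simp [hd, Complex.conj_ofReal]
    have hBH : Bᴴ = A * (V * diagonal d * Vᴴ) := by
      rw [hB]
      simp only [Matrix.conjTranspose_mul, Matrix.conjTranspose_conjTranspose,
        Matrix.diagonal_conjTranspose, hdstar, Matrix.mul_assoc]
    set e : n → ℂ := fun i => if lam i = 0 then 0 else 1 with he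
    have h3 : diagonal d * diagonal (RCLike.ofReal ∘ lam) * diagonal d = diagonal e := by
      rw [Matrix.diagonal_mul_diagonal, Matrix.diagonal_mul_diagonal]
      refine congrArg Matrix.diagonal (funext fun i => ?_)
      show d i * (RCLike.ofReal ∘ lam) i * d i = e i
      simp only [hd, he, Function.comp_apply]
      by_cases hi : lam i = 0
      · simp [hi]
      · have hr : lam i = sv A i * sv A i := by
          have h := sq_sv A i
          rw [pow_two] at h
          exact h.symm
        have hsvne : (sv A i : ℂ) ≠ 0 := by exact_mod_cast hsv i hi
        simp only [if_neg hi]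
        rw [hr]
        push_cast
        field_simp
        rfl
    have hBBH : B * Bᴴ = V * diagonal e * Vᴴ := by
      rw [hBH, hB]
      have h2 : V * diagonal d * Vᴴ * Aᴴ * (A * (V * diagonal d * Vᴴ)) =
          V * (diagonal d * (Vᴴ * (Aᴴ * A) * V) * diagonal d) * Vᴴ := by
        noncomm_ring
      rw [h2, hdiagAA, h3, Matrix.mul_assoc]
    have hestar : star e = e := by
      funext i
      by_cases hi : lam i = 0 <;> simp [he, hi]
    have hpH : (V * diagonal e * Vᴴ)ᴴ = V * diagonal e * Vᴴ := by
      simp only [Matrix.conjTranspose_mul, Matrix.conjTranspose_conjTranspose,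
        Matrix.diagonal_conjTranspose, hestar, Matrix.mul_assoc]
    have hee : (fun i => e i * e i) = e := by
      funext i
      by_cases hi : lam i = 0 <;> simp [he, hi]
    have hpp : (V * diagonal e * Vᴴ) * (V * diagonal e * Vᴴ) = V * diagonal e * Vᴴ := by
      have h5 : (V * diagonal e * Vᴴ) * (V * diagonal e * Vᴴ) =
          V * (diagonal e * (Vᴴ * V) * diagonal e) * Vᴴ := by noncomm_ring
      rw [h5, hVV', Matrix.mul_one, Matrix.diagonal_mul_diagonal, hee, Matrix.mul_assoc]
    have hnp : ‖V * diagonal e * Vᴴ‖ ≤ 1 := proj_norm_le_one hpH hpp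
    have h6 : ‖Bᴴ‖ * ‖Bᴴ‖ = ‖V * diagonal e * Vᴴ‖ := by
      rw [← Matrix.l2_opNorm_conjTranspose_mul_self Bᴴ, Matrix.conjTranspose_conjTranspose, hBBH]
    rw [← Matrix.l2_opNorm_conjTranspose B]
    nlinarith [norm_nonneg Bᴴ]
  · -- trace value
    have h1 : V * diagonal d * Vᴴ * Aᴴ * A = V * (diagonal d * (Vᴴ * (Aᴴ * A))) := by
      noncomm_ring
    rw [h1, Matrix.trace_mul_comm]
    have h2 : diagonal d * (Vᴴ * (Aᴴ * A)) * V = diagonal d * (Vᴴ * (Aᴴ * A) * V) := by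
      noncomm_ring
    rw [h2, hdiagAA, Matrix.diagonal_mul_diagonal, Matrix.trace_diagonal]
    rw [show ((nuc A : ℝ) : ℂ) = ∑ i, (sv A i : ℂ) by rw [nuc]; push_cast; rfl]
    refine Finset.sum_congr rfl fun i _ => ?_
    show d i * (RCLike.ofReal ∘ lam) i = (sv A i : ℂ)
    simp only [hd, Function.comp_apply]
    by_cases hi : lam i = 0
    · have hz : sv A i = 0 := by
        rw [sv, show (Matrix.isHermitian_conjTranspose_mul_self A).eigenvalues i = 0 from hi,
          Real.sqrt_zero]
      simp [hi, hz]
    · have hr : lam i = sv A i * sv A i := by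
        have h := sq_sv A i
        rw [pow_two] at h
        exact h.symm
      have hsvne : (sv A i : ℂ) ≠ 0 := by exact_mod_cast hsv i hi
      simp only [if_neg hi]
      rw [hr]
      push_cast
      field_simp
      rfl

open scoped MatrixOrder in
lemma re_trace_mul_le_psd (B M : Matrix n n ℂ) (hM : M.PosSemidef) :
    ((B * M).trace).re ≤ ‖B‖ * (M.trace).re := by
  classical
  set S := CFC.sqrt M with hSdef
  have hS : S * S = M := CFC.sqrt_mul_sqrt_self M hM.nonneg
  have hSH : Sᴴ = S := (CFC.sqrt_nonneg M).posSemidef.1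
  have h1 : (B * M).trace = (Sᴴ * B * S).trace := by
    rw [hSH, ← hS, ← Matrix.mul_assoc, Matrix.trace_mul_comm, Matrix.mul_assoc]
  have h2 : (M.trace).re = ∑ i, ‖ev (fun a => S a i)‖ ^ 2 := by
    rw [← hS, Matrix.trace]
    rw [show (Matrix.diag (S * S)) = fun i => (S * S) i i from rfl]
    rw [Complex.re_sum]
    refine Finset.sum_congr rfl fun i _ => ?_
    rw [norm_ev_sq]
    congr 1
    simp only [Matrix.mul_apply, dotProduct, Pi.star_apply, RCLike.star_def]
    refine Finset.sum_congr rfl fun a _ => ?_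
    rw [show (starRingEnd ℂ) (S a i) = Sᴴ i a from rfl, hSH]
  rw [h1, h2, Matrix.trace, show (Matrix.diag (Sᴴ * B * S)) = fun i => (Sᴴ * B * S) i i from rfl,
    Complex.re_sum, Finset.mul_sum]
  refine Finset.sum_le_sum fun i _ => ?_
  rw [conj_diag]
  calc (star (fun a => S a i) ⬝ᵥ (B *ᵥ fun a => S a i)).re
      ≤ ‖star (fun a => S a i) ⬝ᵥ (B *ᵥ fun a => S a i)‖ := Complex.re_le_norm _
    _ ≤ ‖ev (fun a => S a i)‖ * ‖ev (B *ᵥ fun a => S a i)‖ := abs_dot_le _ _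
    _ ≤ ‖ev (fun a => S a i)‖ * (‖B‖ * ‖ev (fun a => S a i)‖) := by
        exact mul_le_mul_of_nonneg_left (norm_mulVec_le _ _) (norm_nonneg _)
    _ = ‖B‖ * ‖ev (fun a => S a i)‖ ^ 2 := by ring

lemma nuc_add_le (X Y : Matrix n n ℂ) : nuc (X + Y) ≤ nuc X + nuc Y := by
  obtain ⟨B, hB1, hB2⟩ := exists_dual (X + Y)
  have h0 : nuc (X + Y) = ((B * (X + Y)).trace).re := by rw [hB2, Complex.ofReal_re]
  rw [h0, Matrix.mul_add, Matrix.trace_add, Complex.add_re]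
  have hX := re_trace_mul_le B X
  have hY := re_trace_mul_le B Y
  have hX' : ‖B‖ * nuc X ≤ nuc X := by
    nlinarith [nuc_nonneg X, norm_nonneg B]
  have hY' : ‖B‖ * nuc Y ≤ nuc Y := by
    nlinarith [nuc_nonneg Y, norm_nonneg B]
  linarith

lemma nuc_le_trace_of_psd (M : Matrix n n ℂ) (hM : M.PosSemidef) :
    nuc M ≤ (M.trace).re := by
  obtain ⟨B, hB1, hB2⟩ := exists_dual M
  have h0 : nuc M = ((B * M).trace).re := by rw [hB2, Complex.ofReal_re]
  have htr : 0 ≤ (M.trace).re := by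
    rw [Matrix.trace, Complex.re_sum]
    refine Finset.sum_nonneg fun i _ => ?_
    have := hM.dotProduct_mulVec_nonneg (Pi.single i 1)
    have hdiag : star (Pi.single i 1) ⬝ᵥ (M *ᵥ Pi.single i 1) = M i i := by
      simp [dotProduct, Matrix.mulVec_single, Pi.single_apply, Finset.sum_ite_eq']
    rw [hdiag] at this
    exact (Complex.le_def.mp this).1
  have := re_trace_mul_le_psd B M hM
  nlinarith [norm_nonneg B]

lemma re_trace_le_nuc (M : Matrix n n ℂ) : (M.trace).re ≤ nuc M := by
  have h := re_trace_mul_le (1 : Matrix n n ℂ) M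
  rw [Matrix.one_mul] at h
  nlinarith [norm_one_le (n := n), nuc_nonneg M, norm_nonneg (1 : Matrix n n ℂ)]

lemma neg_re_trace_le_nuc (M : Matrix n n ℂ) : -(M.trace).re ≤ nuc M := by
  have h := re_trace_mul_le (-1 : Matrix n n ℂ) M
  rw [neg_one_mul, Matrix.trace_neg, Complex.neg_re, norm_neg] at h
  nlinarith [norm_one_le (n := n), nuc_nonneg M, norm_nonneg (1 : Matrix n n ℂ)]

lemma nuc_le_rank_mul (A : Matrix n n ℂ) : nuc A ≤ (A.rank : ℝ) * ‖A‖ := by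
  classical
  set hAA := Matrix.isHermitian_conjTranspose_mul_self A
  have hcard : (Finset.univ.filter fun i => hAA.eigenvalues i ≠ 0).card = A.rank := by
    rw [← Matrix.rank_conjTranspose_mul_self A, hAA.rank_eq_card_non_zero_eigs,
      Fintype.card_subtype]
  have h1 : nuc A = ∑ i ∈ Finset.univ.filter fun i => hAA.eigenvalues i ≠ 0, sv A i := by
    rw [nuc]
    refine (Finset.sum_filter_of_ne (p := fun i => hAA.eigenvalues i ≠ 0)
      fun i _ hne h0 => hne ?_).symm
    rw [sv, show (Matrix.isHermitian_conjTranspose_mul_self A).eigenvalues i = 0 from h0,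
      Real.sqrt_zero]
  rw [h1, ← hcard]
  calc ∑ i ∈ Finset.univ.filter fun i => hAA.eigenvalues i ≠ 0, sv A i
      ≤ (Finset.univ.filter fun i => hAA.eigenvalues i ≠ 0).card • ‖A‖ :=
        Finset.sum_le_card_nsmul _ _ _ fun i _ => sv_le_opNorm A i
    _ = _ := nsmul_eq_mul _ _

lemma rayleigh_le {H : Matrix n n ℂ} (hH : H.IsHermitian) {c : ℝ}
    (hc : ∀ i, hH.eigenvalues i ≤ c) (x : n → ℂ) :
    (star x ⬝ᵥ (H *ᵥ x)).re ≤ c * ‖ev x‖ ^ 2 := by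
  classical
  have hVV : (hH.eigenvectorUnitary : Matrix n n ℂ) * star (hH.eigenvectorUnitary : Matrix n n ℂ)
      = 1 := (Matrix.mem_unitaryGroup_iff).mp hH.eigenvectorUnitary.2
  have h1 : (c : ℂ) • (1 : Matrix n n ℂ) = (hH.eigenvectorUnitary : Matrix n n ℂ) *
      ((c : ℂ) • 1) * star (hH.eigenvectorUnitary : Matrix n n ℂ) := by
    rw [Matrix.mul_smul, Matrix.mul_one, Matrix.smul_mul, hVV]
  have hdd : (c : ℂ) • (1 : Matrix n n ℂ) - diagonal (RCLike.ofReal ∘ hH.eigenvalues) =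
      diagonal (fun i => ((c - hH.eigenvalues i : ℝ) : ℂ)) := by
    rw [← Matrix.diagonal_one, ← Matrix.diagonal_smul, Matrix.diagonal_sub]
    congr 1
    funext i
    simp
  have hkey : ((c : ℂ) • 1 - H) = (hH.eigenvectorUnitary : Matrix n n ℂ) *
      diagonal (fun i => ((c - hH.eigenvalues i : ℝ) : ℂ)) *
      star (hH.eigenvectorUnitary : Matrix n n ℂ) := by
    conv_lhs => rw [hH.spectral_theorem, Unitary.conjStarAlgAut_apply]
    conv_lhs => rw [h1]
    rw [← Matrix.sub_mul, ← Matrix.mul_sub, hdd]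
  have hpsd : ((c : ℂ) • 1 - H).PosSemidef := by
    rw [hkey]
    have hd : (Matrix.diagonal (fun i => ((c - hH.eigenvalues i : ℝ) : ℂ))).PosSemidef := by
      refine Matrix.posSemidef_diagonal_iff.mpr fun i => ?_
      rw [Complex.zero_le_real]
      linarith [hc i]
    have := hd.mul_mul_conjTranspose_same (hH.eigenvectorUnitary : Matrix n n ℂ)
    rwa [← Matrix.star_eq_conjTranspose] at this
  have h0 := hpsd.dotProduct_mulVec_nonneg x
  rw [Matrix.sub_mulVec, Matrix.smul_mulVec, Matrix.one_mulVec, dotProduct_sub,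
    dotProduct_smul] at h0
  have h0re := (Complex.le_def.mp h0).1
  have hsm : ((c : ℂ) • (star x ⬝ᵥ x)).re = c * (star x ⬝ᵥ x).re := by
    simp [smul_eq_mul, Complex.mul_re]
  rw [Complex.zero_re, Complex.sub_re, hsm] at h0re
  rw [norm_ev_sq]
  linarith

lemma ciSup_sv_eq_opNorm [Nonempty n] (A : Matrix n n ℂ) : (⨆ i, sv A i) = ‖A‖ := by
  apply le_antisymm
  · exact ciSup_le (sv_le_opNorm A)
  · set c := ⨆ i, sv A i with hc
    have hsvle : ∀ i, sv A i ≤ c := fun i =>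
      le_ciSup (Set.Finite.bddAbove (Set.finite_range _)) i
    have hc0 : 0 ≤ c := le_trans (sv_nonneg A (Classical.arbitrary n))
      (hsvle (Classical.arbitrary n))
    have heig : ∀ i, (Matrix.isHermitian_conjTranspose_mul_self A).eigenvalues i ≤ c ^ 2 := by
      intro i
      rw [← sq_sv A i]
      exact pow_le_pow_left₀ (sv_nonneg A i) (hsvle i) 2
    rw [Matrix.l2_opNorm_def]
    refine ContinuousLinearMap.opNorm_le_bound _ hc0 fun x => ?_
    have hx : ‖ev (A *ᵥ (WithLp.equiv 2 _ x))‖ ≤ c * ‖x‖ := by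
      have h1 := norm_ev_mulVec_sq A (WithLp.equiv 2 _ x)
      have h2 := rayleigh_le (Matrix.isHermitian_conjTranspose_mul_self A) heig
        (WithLp.equiv 2 _ x)
      have h3 : ev (WithLp.equiv 2 _ x) = x := rfl
      rw [h3] at h2
      have h4 : ‖ev (A *ᵥ (WithLp.equiv 2 _ x))‖ ^ 2 ≤ (c * ‖x‖) ^ 2 := by
        rw [h1, mul_pow]
        exact h2
      have h5 : 0 ≤ c * ‖x‖ := mul_nonneg hc0 (norm_nonneg x)
      nlinarith [norm_nonneg (ev (A *ᵥ (WithLp.equiv 2 _ x)))]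
    exact hx

end SchattenAux

open SchattenAux

/-- If ρ is a density matrix of rank at most r supported on L, and P is the orthogonal
projector onto L^⊥, then for every density matrix ρ̂:
‖ρ̂ − ρ‖₁ ≤ 2‖𝒫_L(ρ̂−ρ)‖₁ ≤ 4r‖ρ̂−ρ‖_∞, where 𝒫_L(A) = A − P A P. -/
theorem nuclear_le_proj_le_rank_mul_op {m : ℕ} (r : ℕ)
    (ρ ρhat P : Matrix (Fin m) (Fin m) ℂ)
    (hρ : IsDensityMatrix ρ) (hρhat : IsDensityMatrix ρhat)
    (hrank : ρ.rank ≤ r)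
    (hP : P.IsHermitian) (hP2 : P * P = P) (hPρ : P * ρ = 0)
    (hPrank : P.rank + ρ.rank = m) :
    schattenNorm 1 (ρhat - ρ) ≤ 2 * schattenNorm 1 ((ρhat - ρ) - P * (ρhat - ρ) * P) ∧
    2 * schattenNorm 1 ((ρhat - ρ) - P * (ρhat - ρ) * P)
      ≤ 4 * r * schattenNorm ⊤ (ρhat - ρ) := by
  classical
  have hm : Nonempty (Fin m) := by
    rcases Nat.eq_zero_or_pos m with h0 | hpos
    · exfalso
      have h1 := hρ.2
      subst h0
      simp [Matrix.trace] at h1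
    · exact ⟨⟨0, hpos⟩⟩
  set Δ := ρhat - ρ with hΔ
  set E := Δ - P * Δ * P with hE
  have hPesP : P * Δ * P = P * ρhat * P := by
    rw [hΔ, Matrix.mul_sub, Matrix.sub_mul, hPρ, Matrix.zero_mul, sub_zero]
  have hpsd : (P * ρhat * P).PosSemidef := by
    have := hρhat.1.mul_mul_conjTranspose_same P
    rwa [hP.eq] at this
  have htrΔ : Δ.trace = 0 := by
    rw [hΔ, Matrix.trace_sub, hρhat.2, hρ.2, sub_self]
  have htrE : (P * Δ * P).trace = -(E.trace) := by
    rw [hE, Matrix.trace_sub, htrΔ, zero_sub, neg_neg]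
  -- first inequality
  have hfirst : nuc Δ ≤ 2 * nuc E := by
    have h1 : Δ = E + P * Δ * P := by rw [hE]; abel
    have h2 : nuc Δ ≤ nuc E + nuc (P * Δ * P) := by
      conv_lhs => rw [h1]
      exact nuc_add_le _ _
    have h3 : nuc (P * Δ * P) ≤ ((P * Δ * P).trace).re := by
      rw [hPesP]
      exact nuc_le_trace_of_psd _ hpsd
    have h4 : ((P * Δ * P).trace).re = -((E.trace).re) := by
      rw [htrE, Complex.neg_re]
    have h5 : -((E.trace).re) ≤ nuc E := neg_re_trace_le_nuc E
    linarith
  -- second inequality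
  set Q : Matrix (Fin m) (Fin m) ℂ := 1 - P with hQ
  have hQ2 : Q * Q = Q := by
    rw [hQ, Matrix.sub_mul, Matrix.one_mul, Matrix.mul_sub, Matrix.mul_one, hP2, sub_self,
      sub_zero]
  have hQH : Qᴴ = Q := by
    rw [hQ, Matrix.conjTranspose_sub, Matrix.conjTranspose_one, hP.eq]
  have hQnorm : ‖Q‖ ≤ 1 := proj_norm_le_one hQH hQ2
  have hPnorm : ‖P‖ ≤ 1 := proj_norm_le_one hP.eq hP2
  have hQP : Q * P = 0 := by
    rw [hQ, Matrix.sub_mul, Matrix.one_mul, hP2, sub_self]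
  have hrankQ : Q.rank ≤ r := by
    have h1 := Matrix.rank_add_rank_le_card_of_mul_eq_zero hQP
    rw [Fintype.card_fin] at h1
    omega
  have hEQ : E = Q * Δ + P * Δ * Q := by
    rw [hE, hQ]
    noncomm_ring
  have hΔ0 : (0:ℝ) ≤ ‖Δ‖ := norm_nonneg _
  have hQΔ : nuc (Q * Δ) ≤ (r : ℝ) * ‖Δ‖ := by
    have h8 := nuc_le_rank_mul (Q * Δ)
    have h9 : (((Q * Δ).rank : ℕ) : ℝ) ≤ (r : ℝ) := by
      exact_mod_cast (Matrix.rank_mul_le_left Q Δ).trans hrankQ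
    have h10 : ‖Q * Δ‖ ≤ ‖Δ‖ := by
      have := Matrix.l2_opNorm_mul Q Δ
      nlinarith [norm_nonneg Q]
    calc nuc (Q * Δ) ≤ ((Q * Δ).rank : ℝ) * ‖Q * Δ‖ := h8
      _ ≤ (r : ℝ) * ‖Δ‖ := by
          apply mul_le_mul h9 h10 (norm_nonneg _) (by positivity)
  have hPΔQ : nuc (P * Δ * Q) ≤ (r : ℝ) * ‖Δ‖ := by
    have h8 := nuc_le_rank_mul (P * Δ * Q)
    have h9 : (((P * Δ * Q).rank : ℕ) : ℝ) ≤ (r : ℝ) := by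
      exact_mod_cast (Matrix.rank_mul_le_right (P * Δ) Q).trans hrankQ
    have h10 : ‖P * Δ * Q‖ ≤ ‖Δ‖ := by
      have ha := Matrix.l2_opNorm_mul (P * Δ) Q
      have hb := Matrix.l2_opNorm_mul P Δ
      nlinarith [norm_nonneg (P * Δ), norm_nonneg P, norm_nonneg Q]
    calc nuc (P * Δ * Q) ≤ ((P * Δ * Q).rank : ℝ) * ‖P * Δ * Q‖ := h8
      _ ≤ (r : ℝ) * ‖Δ‖ := by
          apply mul_le_mul h9 h10 (norm_nonneg _) (by positivity)
  have hsecond : nuc E ≤ 2 * (r : ℝ) * ‖Δ‖ := by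
    have h1 : nuc E ≤ nuc (Q * Δ) + nuc (P * Δ * Q) := by
      conv_lhs => rw [hEQ]
      exact nuc_add_le _ _
    linarith
  have htop : schattenNorm ⊤ Δ = ‖Δ‖ := by
    rw [schattenNorm_top_eq]
    exact ciSup_sv_eq_opNorm Δ
  constructor
  · rw [schattenNorm_one_eq, schattenNorm_one_eq]
    exact hfirst
  · rw [schattenNorm_one_eq, htop]
    linarith
end
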